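/- arXiv:2504.10719 — 3 statements merged into one kernel-verified Lean document; each statement's English description precedes it below -/
import Mathlib

section
/- Let f, g be probability densities on ℝ^d and p ∈ (0,1), q = 1-p. If δ(f,g,p) = pq, where δ(f,g,p) = pq ∫ f(x)g(x)/(pf(x)+qg(x)) dx, then f = g almost everywhere. -/
open MeasureTheory

/-- Equality case of the Henze–Penrose inequality: if `pq ∫ f g/(pf+qg) = pq`
for densities `f, g` on `ℝ^d`, then `f = g` almost everywhere. -/
theorem henze_penrose_eq_iff (d : ℕ) (f g : EuclideanSpace ℝ (Fin d) → ℝ)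
    (hf : Measurable f) (hg : Measurable g)
    (hf0 : ∀ x, 0 ≤ f x) (hg0 : ∀ x, 0 ≤ g x)
    (hf1 : ∫ x, f x = 1) (hg1 : ∫ x, g x = 1)
    (p : ℝ) (hp : p ∈ Set.Ioo (0 : ℝ) 1) (q : ℝ) (hq : q = 1 - p)
    (heq : p * q * ∫ x, f x * g x / (p * f x + q * g x) = p * q) :
    f =ᵐ[volume] g := by
  obtain ⟨hp0, hp1⟩ := hp
  subst hq
  set q := 1 - p with hq
  have hq0 : 0 < q := by rw [hq]; linarith
  have hfint : Integrable f := by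
    by_contra hc; rw [integral_undef hc] at hf1; norm_num at hf1
  have hgint : Integrable g := by
    by_contra hc; rw [integral_undef hc] at hg1; norm_num at hg1
  set h : EuclideanSpace ℝ (Fin d) → ℝ :=
    fun x => f x * g x / (p * f x + q * g x) with hh
  have hnn : ∀ x, 0 ≤ h x := fun x =>
    div_nonneg (mul_nonneg (hf0 x) (hg0 x))
      (by have := hf0 x; have := hg0 x; positivity)
  have hle : ∀ x, h x ≤ q * f x + p * g x := by
    intro x
    have hD : (0:ℝ) ≤ p * f x + q * g x := by
      have := hf0 x; have := hg0 x; positivity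
    rcases hD.eq_or_lt with h0 | h0
    · have : h x = 0 := by rw [hh]; simp [← h0]
      rw [this]
      have := hf0 x; have := hg0 x; positivity
    · rw [hh, div_le_iff₀ h0, hq]
      nlinarith [mul_nonneg (mul_nonneg hp0.le (by linarith : (0:ℝ) ≤ 1 - p)) (sq_nonneg (f x - g x)),
        hf0 x, hg0 x, mul_nonneg (hf0 x) (hg0 x)]
  have hmeas : Measurable h :=
    (hf.mul hg).div ((measurable_const.mul hf).add (measurable_const.mul hg))
  have hdomint : Integrable (fun x => q * f x + p * g x) :=
    (hfint.const_mul q).add (hgint.const_mul p)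
  have hint : Integrable h :=
    Integrable.mono' hdomint hmeas.aestronglyMeasurable
      (ae_of_all _ fun x => by rw [Real.norm_eq_abs, abs_of_nonneg (hnn x)]; exact hle x)
  have hpq : (0:ℝ) < p * q := by positivity
  have hInth : ∫ x, h x = 1 := by
    have := mul_left_cancel₀ (ne_of_gt hpq) (heq.trans (mul_one (p*q)).symm)
    exact this
  have hφ0 : ∫ x, (q * f x + p * g x - h x) = 0 := by
    rw [integral_sub hdomint hint,
      integral_add (hfint.const_mul q) (hgint.const_mul p),
      integral_const_mul, integral_const_mul, hf1, hg1, hInth]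
    rw [hq]; ring
  have hae : (fun x => q * f x + p * g x - h x) =ᵐ[volume] 0 :=
    (integral_eq_zero_iff_of_nonneg (fun x => sub_nonneg.2 (hle x))
      (hdomint.sub hint)).mp hφ0
  filter_upwards [hae] with x hx
  simp only [Pi.zero_apply] at hx
  have hx' : h x = q * f x + p * g x := by linarith
  have hD : (0:ℝ) ≤ p * f x + q * g x := by
    have := hf0 x; have := hg0 x; positivity
  rcases hD.eq_or_lt with h0 | h0
  · have hfx : f x = 0 := by nlinarith [hf0 x, hg0 x]
    have hgx : g x = 0 := by nlinarith [hf0 x, hg0 x]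
    rw [hfx, hgx]
  · have h2 : f x * g x = (q * f x + p * g x) * (p * f x + q * g x) := by
      rw [← hx', hh]
      field_simp
      rw [mul_div_assoc, div_self (ne_of_gt (by linarith)), mul_one]
    have h3 : p * q * (f x - g x) ^ 2 = 0 := by
      rw [hq] at h2 ⊢; linear_combination -h2
    have h4 : (f x - g x) ^ 2 = 0 := by
      rcases mul_eq_zero.mp h3 with h5 | h5
      · exact absurd h5 (ne_of_gt (mul_pos hp0 hq0))
      · exact h5
    have := pow_eq_zero_iff (two_ne_zero) |>.mp h4
    linarith
end

section
/- Let x ∈ ℝ^d be nonzero and 0 < θ ≤ π/6, and let C(x,θ) = {0} ∪ {y : arccos(⟨x,y⟩/(‖x‖‖y‖)) ≤ θ} be the cone of angle θ around x. Then for any y₁, y₂ ∈ C(x,θ) with ‖y₁‖ ≤ ‖y₂‖, one has ‖y₁ - y₂‖ ≤ ‖y₂‖. -/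
open scoped RealInnerProductSpace

/-- If `y` is nonzero and lies in the cone of angle `θ` around nonzero `x`, then
`⟪x/‖x‖, y⟫ ≥ ‖y‖ cos θ`. -/
lemma cone_inner_ge (d : ℕ) (x : EuclideanSpace ℝ (Fin d)) (hx : x ≠ 0)
    (θ : ℝ) (hθπ : θ ≤ Real.pi)
    (y : EuclideanSpace ℝ (Fin d)) (hy0 : y ≠ 0)
    (hy : Real.arccos (⟪x, y⟫ / (‖x‖ * ‖y‖)) ≤ θ) :
    ‖y‖ * Real.cos θ ≤ ⟪x, y⟫ / ‖x‖ := by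
  have hxn : (0:ℝ) < ‖x‖ := norm_pos_iff.mpr hx
  have hyn : (0:ℝ) < ‖y‖ := norm_pos_iff.mpr hy0
  set t : ℝ := ⟪x, y⟫ / (‖x‖ * ‖y‖) with ht
  have habs : |⟪x, y⟫| ≤ ‖x‖ * ‖y‖ := abs_real_inner_le_norm x y
  have ht1 : t ≤ 1 := by
    rw [ht, div_le_one (by positivity)]
    exact (le_abs_self _).trans habs
  have ht2 : -1 ≤ t := by
    rw [ht, le_div_iff₀ (by positivity)]
    nlinarith [neg_abs_le (⟪x, y⟫ : ℝ)]
  have hcos : Real.cos θ ≤ t := by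
    have := Real.cos_le_cos_of_nonneg_of_le_pi (Real.arccos_nonneg t) hθπ hy
    rwa [Real.cos_arccos ht2 ht1] at this
  have : ‖y‖ * Real.cos θ ≤ ‖y‖ * t := by
    exact mul_le_mul_of_nonneg_left hcos hyn.le
  calc ‖y‖ * Real.cos θ ≤ ‖y‖ * t := this
    _ = ⟪x, y⟫ / ‖x‖ := by rw [ht]; field_simp


/-- Pure real-arithmetic core of the cone lemma. -/
lemma cone_arith (n1 n2 m1 m2 a1 a2 i12 s12 iw c : ℝ)
    (hn1' : 0 ≤ n1) (hn2' : 0 ≤ n2) (hm1 : 0 ≤ m1) (hm2 : 0 ≤ m2)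
    (hnorm : n1 ≤ n2) (hs : s12 ^ 2 = n1 ^ 2 - 2 * i12 + n2 ^ 2) (hs0 : 0 ≤ s12)
    (hw12 : -(m1 * m2) ≤ iw) (hdecomp : i12 = a1 * a2 + iw)
    (hc34 : 3 / 4 ≤ c ^ 2) (hc0 : 0 ≤ c) (hc1 : c ≤ 1)
    (hb1 : m1 ^ 2 ≤ n1 ^ 2 * (1 - c ^ 2)) (hb2 : m2 ^ 2 ≤ n2 ^ 2 * (1 - c ^ 2))
    (ha1 : n1 * c ≤ a1) (ha2 : n2 * c ≤ a2) : s12 ≤ n2 := by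
  have h1c : (0 : ℝ) ≤ 1 - c ^ 2 := by nlinarith
  have hwprod : m1 * m2 ≤ n1 * n2 * (1 - c ^ 2) := by
    nlinarith [mul_le_mul hb1 hb2 (sq_nonneg m2) (mul_nonneg (sq_nonneg n1) h1c),
      sq_nonneg (m1 * m2), mul_nonneg (mul_nonneg hn1' hn2') h1c]
  have haprod : n1 * n2 * c ^ 2 ≤ a1 * a2 := by
    have := mul_le_mul ha1 ha2 (mul_nonneg hn2' hc0)
      (le_trans (mul_nonneg hn1' hc0) ha1)
    nlinarith
  have hinner : n1 * n2 / 2 ≤ i12 := by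
    rw [hdecomp]
    nlinarith [mul_nonneg hn1' hn2']
  have hsq : s12 ^ 2 ≤ n2 ^ 2 := by
    nlinarith [mul_nonneg hn1' hn2']
  nlinarith

/-- Cone lemma: if `y₁, y₂` lie in the cone of angle `θ ≤ π/6` around a nonzero `x`
and `‖y₁‖ ≤ ‖y₂‖`, then `‖y₁ - y₂‖ ≤ ‖y₂‖`. -/
theorem cone_lemma (d : ℕ) (x : EuclideanSpace ℝ (Fin d)) (hx : x ≠ 0)
    (θ : ℝ) (hθ0 : 0 < θ) (hθ : θ ≤ Real.pi / 6)
    (y₁ y₂ : EuclideanSpace ℝ (Fin d))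
    (hy₁ : y₁ = 0 ∨ Real.arccos (⟪x, y₁⟫ / (‖x‖ * ‖y₁‖)) ≤ θ)
    (hy₂ : y₂ = 0 ∨ Real.arccos (⟪x, y₂⟫ / (‖x‖ * ‖y₂‖)) ≤ θ)
    (hnorm : ‖y₁‖ ≤ ‖y₂‖) :
    ‖y₁ - y₂‖ ≤ ‖y₂‖ := by
  have hπ : (0:ℝ) < Real.pi := Real.pi_pos
  have hθπ : θ ≤ Real.pi := hθ.trans (by linarith)
  rcases eq_or_ne y₁ 0 with h1 | h1
  · simp [h1]
  rcases eq_or_ne y₂ 0 with h2 | h2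
  · exfalso; apply h1; rw [← norm_eq_zero]
    have : ‖y₂‖ = 0 := by simp [h2]
    have := norm_nonneg y₁; linarith
  replace hy₁ := hy₁.resolve_left h1
  replace hy₂ := hy₂.resolve_left h2
  have hxn : (0:ℝ) < ‖x‖ := norm_pos_iff.mpr hx
  obtain ⟨u, hun, key⟩ : ∃ u : EuclideanSpace ℝ (Fin d),
      ‖u‖ = 1 ∧ ∀ y : EuclideanSpace ℝ (Fin d), ⟪u, y⟫ = ⟪x, y⟫ / ‖x‖ := by
    refine ⟨‖x‖⁻¹ • x, ?_, fun y => ?_⟩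
    · rw [norm_smul]; simp [abs_of_pos (inv_pos.mpr hxn)]; field_simp
    · rw [real_inner_smul_left]; ring
  have hc1 : ‖y₁‖ * Real.cos θ ≤ ⟪u, y₁⟫ := by
    rw [key]; exact cone_inner_ge d x hx θ hθπ y₁ h1 hy₁
  have hc2 : ‖y₂‖ * Real.cos θ ≤ ⟪u, y₂⟫ := by
    rw [key]; exact cone_inner_ge d x hx θ hθπ y₂ h2 hy₂
  have hcosθ : Real.cos (Real.pi / 6) ≤ Real.cos θ :=
    Real.cos_le_cos_of_nonneg_of_le_pi hθ0.le (by linarith) hθ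
  have hcos34 : (3:ℝ)/4 ≤ Real.cos θ ^ 2 := by
    rw [Real.cos_pi_div_six] at hcosθ
    have h3 : (0:ℝ) ≤ Real.sqrt 3 / 2 := by positivity
    nlinarith [Real.sq_sqrt (by norm_num : (3:ℝ) ≥ 0)]
  have hcospos : (0:ℝ) ≤ Real.cos θ :=
    le_trans (by rw [Real.cos_pi_div_six]; positivity) hcosθ
  set a₁ : ℝ := ⟪u, y₁⟫ with ha₁
  set a₂ : ℝ := ⟪u, y₂⟫ with ha₂
  set w₁ : EuclideanSpace ℝ (Fin d) := y₁ - a₁ • u with hw₁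
  set w₂ : EuclideanSpace ℝ (Fin d) := y₂ - a₂ • u with hw₂
  have ho : ∀ y : EuclideanSpace ℝ (Fin d), ⟪u, y - (⟪u, y⟫ : ℝ) • u⟫ = 0 := by
    intro y
    rw [inner_sub_right, real_inner_smul_right, real_inner_self_eq_norm_sq, hun]
    ring
  have ho1 : ⟪u, w₁⟫ = 0 := ho y₁
  have ho2 : ⟪u, w₂⟫ = 0 := ho y₂
  have hnw : ∀ y : EuclideanSpace ℝ (Fin d),
      ‖y - (⟪u, y⟫ : ℝ) • u‖ ^ 2 = ‖y‖ ^ 2 - (⟪u, y⟫ : ℝ) ^ 2 := by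
    intro y
    rw [norm_sub_sq_real, real_inner_smul_right, real_inner_comm y u, norm_smul, hun,
        mul_one, Real.norm_eq_abs, sq_abs]
    ring
  have hn1 : ‖w₁‖ ^ 2 = ‖y₁‖ ^ 2 - a₁ ^ 2 := hnw y₁
  have hn2 : ‖w₂‖ ^ 2 = ‖y₂‖ ^ 2 - a₂ ^ 2 := hnw y₂
  have hy1n : (0:ℝ) ≤ ‖y₁‖ := norm_nonneg _
  have hy2n : (0:ℝ) ≤ ‖y₂‖ := norm_nonneg _
  have hb1 : ‖w₁‖ ^ 2 ≤ ‖y₁‖ ^ 2 * (1 - Real.cos θ ^ 2) := by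
    nlinarith [mul_le_mul hc1 hc1 (by positivity) (le_trans (by positivity) hc1)]
  have hb2 : ‖w₂‖ ^ 2 ≤ ‖y₂‖ ^ 2 * (1 - Real.cos θ ^ 2) := by
    nlinarith [mul_le_mul hc2 hc2 (by positivity) (le_trans (by positivity) hc2)]
  have hdecomp : ⟪y₁, y₂⟫ = a₁ * a₂ + ⟪w₁, w₂⟫ := by
    have e : (⟪w₁, w₂⟫ : ℝ) = ⟪y₁, y₂⟫ - a₁ * a₂ := by
      rw [hw₁, hw₂]
      simp only [inner_sub_left, inner_sub_right, real_inner_smul_left,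
        real_inner_smul_right, real_inner_self_eq_norm_sq, hun]
      rw [real_inner_comm u y₁, ← ha₁, ← ha₂]
      ring
    rw [e]; ring
  have hw12 : -(‖w₁‖ * ‖w₂‖) ≤ ⟪w₁, w₂⟫ := by
    have h := abs_real_inner_le_norm w₁ w₂
    have h' := neg_abs_le (⟪w₁, w₂⟫ : ℝ)
    linarith
  -- make everything opaque real arithmetic from here on
  set i12 : ℝ := ⟪y₁, y₂⟫ with hi12
  set s12 : ℝ := ‖y₁ - y₂‖ with hs12
  have hs12sq : s12 ^ 2 = ‖y₁‖ ^ 2 - 2 * i12 + ‖y₂‖ ^ 2 := by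
    rw [hs12, hi12, norm_sub_sq_real]
  have hs12n : (0:ℝ) ≤ s12 := norm_nonneg _
  set n1 : ℝ := ‖y₁‖
  set n2 : ℝ := ‖y₂‖
  set m1 : ℝ := ‖w₁‖ with hm1
  set m2 : ℝ := ‖w₂‖ with hm2
  have hm1n : (0:ℝ) ≤ m1 := norm_nonneg _
  have hm2n : (0:ℝ) ≤ m2 := norm_nonneg _
  clear_value i12 s12 n1 n2 m1 m2 a₁ a₂ w₁ w₂
  clear hw₁ hw₂ ha₁ ha₂ ho ho1 ho2 hnw key hy₁ hy₂ hun hi12 hs12 hm1 hm2 hθ hθπ u hxn hx x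
  have hcle1 : Real.cos θ ≤ 1 := Real.cos_le_one θ
  exact cone_arith n1 n2 m1 m2 a₁ a₂ i12 s12 (⟪w₁, w₂⟫) (Real.cos θ)
    hy1n hy2n hm1n hm2n hnorm hs12sq hs12n hw12 hdecomp hcos34 hcospos hcle1
    hb1 hb2 hc1 hc2
end

section
/- Let S ⊂ ℝ^d be compact and convex with S equal to the closure of its interior, and fix R > 0. Then there exists M > 0 such that for every x ∈ S and every θ ∈ [0,1], the Lebesgue measure of S ∩ B(x, Rθ) is at least M θ^d. -/
open MeasureTheory Metric

/-- For a compact convex `S ⊆ ℝ^d` equal to the closure of its interior and any `R > 0`,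
there is `M > 0` with `λ(S ∩ B(x, Rθ)) ≥ M θ^d` for all `x ∈ S` and `θ ∈ [0,1]`. -/
theorem convex_ball_volume_lower_bound (d : ℕ) (hd : 1 ≤ d)
    (S : Set (EuclideanSpace ℝ (Fin d))) (hScompact : IsCompact S) (hSconv : Convex ℝ S)
    (hSint : S = closure (interior S)) (R : ℝ) (hR : 0 < R) :
    ∃ M : ℝ, 0 < M ∧ ∀ x ∈ S, ∀ θ ∈ Set.Icc (0 : ℝ) 1,
      M * θ ^ d ≤ (volume (S ∩ ball x (R * θ))).toReal := by
  rcases S.eq_empty_or_nonempty with hemp | hne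
  · exact ⟨1, one_pos, by simp [hemp]⟩
  -- interior is nonempty
  have hint : (interior S).Nonempty := by
    by_contra h
    rw [Set.not_nonempty_iff_eq_empty] at h
    rw [h, closure_empty] at hSint
    exact hne.ne_empty hSint
  obtain ⟨z, hz⟩ := hint
  obtain ⟨ε, hε, hball⟩ : ∃ ε > 0, ball z ε ⊆ S := by
    rcases Metric.mem_nhds_iff.mp (mem_interior_iff_mem_nhds.mp hz) with ⟨ε, hε, hb⟩
    exact ⟨ε, hε, hb⟩
  have hzS : z ∈ S := interior_subset hz
  obtain ⟨D, hD⟩ := hScompact.isBounded.subset_closedBall z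
  have hD0 : 0 ≤ D := by
    have := hD hzS
    simpa using this
  have hDε : 0 < D + ε := by linarith
  set m : ℝ := min 1 (R / (D + ε)) with hm
  have hm0 : 0 < m := lt_min one_pos (div_pos hR hDε)
  have hm1 : m ≤ 1 := min_le_left _ _
  have vol1pos : 0 < (volume (ball (0 : EuclideanSpace ℝ (Fin d)) 1)).toReal := by
    apply ENNReal.toReal_pos
    · exact (measure_ball_pos volume 0 one_pos).ne'
    · exact measure_ball_lt_top.ne
  refine ⟨(m * ε) ^ d * (volume (ball (0 : EuclideanSpace ℝ (Fin d)) 1)).toReal,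
    mul_pos (pow_pos (mul_pos hm0 hε) d) vol1pos, ?_⟩
  intro x hx θ hθ
  obtain ⟨hθ0, hθ1⟩ := hθ
  rcases hθ0.eq_or_lt with h0 | hθpos
  · have : θ ^ d = 0 := by
      rw [← h0]; exact zero_pow (by omega)
    rw [this, mul_zero]
    exact ENNReal.toReal_nonneg
  set t : ℝ := θ * m with ht
  have htpos : 0 < t := mul_pos hθpos hm0
  have ht1 : t ≤ 1 := by
    calc t ≤ 1 * 1 := mul_le_mul hθ1 hm1 hm0.le one_pos.le
    _ = 1 := one_mul 1
  set y : EuclideanSpace ℝ (Fin d) := x + t • (z - x) with hy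
  -- key inclusion
  have hincl : ball y (t * ε) ⊆ S ∩ ball x (R * θ) := by
    intro u hu
    simp only [Metric.mem_ball] at hu
    constructor
    · -- u ∈ S by convexity
      set w : EuclideanSpace ℝ (Fin d) := z + t⁻¹ • (u - y) with hw
      have hwz : dist w z < ε := by
        rw [dist_eq_norm]
        have : w - z = t⁻¹ • (u - y) := by rw [hw]; abel
        rw [this, norm_smul, norm_inv, Real.norm_of_nonneg htpos.le]
        rw [dist_eq_norm] at hu
        rw [inv_mul_lt_iff₀ htpos]
        linarith
      have hwS : w ∈ S := hball hwz
      have hrepr : u = (1 - t) • x + t • w := by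
        rw [hw, hy]
        rw [smul_add, smul_smul, mul_inv_cancel₀ htpos.ne', one_smul]
        module
      rw [hrepr]
      exact hSconv hx hwS (by linarith) htpos.le (by ring)
    · -- u ∈ ball x (R * θ)
      rw [Metric.mem_ball]
      have hzx : ‖z - x‖ ≤ D := by
        have := hD hx
        rw [Metric.mem_closedBall, dist_comm, dist_eq_norm] at this
        exact this
      have hyx : dist y x = t * ‖z - x‖ := by
        rw [hy, dist_eq_norm]
        have : x + t • (z - x) - x = t • (z - x) := by abel
        rw [this, norm_smul, Real.norm_of_nonneg htpos.le]
      calc dist u x ≤ dist u y + dist y x := dist_triangle u y x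
        _ < t * ε + t * ‖z - x‖ := by rw [hyx]; linarith
        _ ≤ t * ε + t * D := by nlinarith
        _ = t * (D + ε) := by ring
        _ = θ * (m * (D + ε)) := by rw [ht]; ring
        _ ≤ θ * R := by
            apply mul_le_mul_of_nonneg_left _ hθpos.le
            calc m * (D + ε) ≤ (R / (D + ε)) * (D + ε) :=
              mul_le_mul_of_nonneg_right (min_le_right _ _) hDε.le
            _ = R := div_mul_cancel₀ R hDε.ne'
        _ = R * θ := mul_comm θ R
  -- volume computation
  have hfin : volume (S ∩ ball x (R * θ)) < ⊤ :=
    lt_of_le_of_lt (measure_mono Set.inter_subset_left) hScompact.measure_lt_top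
  haveI : Nonempty (Fin d) := ⟨⟨0, by omega⟩⟩
  haveI : Nontrivial (EuclideanSpace ℝ (Fin d)) := by
    unfold EuclideanSpace; infer_instance
  have hvball : volume (ball y (t * ε)) =
      ENNReal.ofReal ((t * ε) ^ d) * volume (ball (0 : EuclideanSpace ℝ (Fin d)) 1) := by
    rw [Measure.addHaar_ball volume y (mul_nonneg htpos.le hε.le)]
    simp [finrank_euclideanSpace_fin]
  have hle : volume (ball y (t * ε)) ≤ volume (S ∩ ball x (R * θ)) := measure_mono hincl
  have h1 : ((t * ε) ^ d) * (volume (ball (0 : EuclideanSpace ℝ (Fin d)) 1)).toReal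
      ≤ (volume (S ∩ ball x (R * θ))).toReal := by
    rw [← ENNReal.toReal_ofReal (pow_nonneg (mul_nonneg htpos.le hε.le) d),
      ← ENNReal.toReal_mul, ← hvball]
    exact ENNReal.toReal_mono hfin.ne hle
  calc (m * ε) ^ d * (volume (ball (0 : EuclideanSpace ℝ (Fin d)) 1)).toReal * θ ^ d
      = (t * ε) ^ d * (volume (ball (0 : EuclideanSpace ℝ (Fin d)) 1)).toReal := by
        rw [ht]; ring
    _ ≤ _ := h1
end
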